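/- Consider n agents evolving by the discrete-time algorithm (8) with constants 0 < γ_i ≤ 1 for all i, and suppose Assumptions 1, 2 and 7 hold. Then, for arbitrary initial conditions x_i(0) ∈ ℝ^m: (1) there exists a bounded region of ℝ^m containing x_i(k) for all i and all k; and (2) there exists an integer K such that √(q_i(k)) > ‖∇f_i(v_i(k))‖² for all i and all k ≥ K, i.e., gr_i(k) = ∇f_i(v_i(k))/√(q_i(k)) for all k ≥ K. -/

import Mathlib

open Filter Topology Bornology

/-- `P` is the Euclidean (metric) projection onto the set `C`. -/
def IsProjOn {m : ℕ} (C : Set (EuclideanSpace ℝ (Fin m)))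
    (P : EuclideanSpace ℝ (Fin m) → EuclideanSpace ℝ (Fin m)) : Prop :=
  ∀ x, P x ∈ C ∧ ∀ s ∈ C, ‖x - P x‖ ≤ ‖x - s‖

private lemma sq_le_imp {a b : ℝ} (hb : 0 ≤ b) (h : a ^ 2 ≤ b ^ 2) : a ≤ b := by
  nlinarith

set_option maxHeartbeats 1000000 in
private lemma grad_ineq {m : ℕ} {f : EuclideanSpace ℝ (Fin m) → ℝ}
    (hdiff : Differentiable ℝ f) (hconv : ConvexOn ℝ Set.univ f)
    (x y : EuclideanSpace ℝ (Fin m)) :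
    (inner ℝ (gradient f x) (y - x) : ℝ) ≤ f y - f x := by
  set L : ℝ → EuclideanSpace ℝ (Fin m) := fun t : ℝ => x + t • (y - x) with hL
  have hL0 : L 0 = x := by simp [hL]
  have hL1 : L 1 = y := by simp [hL]
  have hgc : ConvexOn ℝ Set.univ (fun t : ℝ => f (L t)) := by
    have h1 := hconv.comp_affineMap (AffineMap.lineMap x y : ℝ →ᵃ[ℝ] EuclideanSpace ℝ (Fin m))
    have h2 : (f ∘ (AffineMap.lineMap x y : ℝ →ᵃ[ℝ] EuclideanSpace ℝ (Fin m)))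
        = fun t : ℝ => f (L t) := by
      funext t
      simp only [Function.comp_apply, AffineMap.lineMap_apply_module, hL]
      congr 1
      module
    rwa [Set.preimage_univ, h2] at h1
  have hline : HasDerivAt L (y - x) 0 := by
    have := (((hasDerivAt_id (0:ℝ)).smul_const (y - x)).const_add x)
    simpa [hL] using this
  have hF : HasFDerivAt f (InnerProductSpace.toDual ℝ _ (gradient f x)) (L 0) := by
    rw [hL0]; exact (hdiff x).hasGradientAt.hasFDerivAt
  have hg : HasDerivAt (fun t => f (L t)) ((inner ℝ (gradient f x) (y - x) : ℝ)) 0 := by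
    have := hF.comp_hasDerivAt 0 hline
    rw [InnerProductSpace.toDual_apply_apply] at this
    exact this
  have hslope := hgc.le_slope_of_hasDerivAt (Set.mem_univ (0:ℝ)) (Set.mem_univ (1:ℝ)) one_pos hg
  rw [slope_def_field, hL0, hL1] at hslope
  simpa using hslope

set_option maxHeartbeats 1000000 in
private lemma proj_ineq {m : ℕ} {C : Set (EuclideanSpace ℝ (Fin m))} (hc : Convex ℝ C)
    {P : EuclideanSpace ℝ (Fin m) → EuclideanSpace ℝ (Fin m)} (hP : IsProjOn C P)
    (u : EuclideanSpace ℝ (Fin m)) {s : EuclideanSpace ℝ (Fin m)} (hs : s ∈ C) :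
    ‖P u - s‖ ≤ ‖u - s‖ := by
  obtain ⟨hmem, hmin⟩ := hP u
  haveI : Nonempty ↑C := ⟨⟨P u, hmem⟩⟩
  have hbdd : BddBelow (Set.range fun w : C => ‖u - (w : EuclideanSpace ℝ (Fin m))‖) :=
    ⟨0, by rintro r ⟨w, rfl⟩; exact norm_nonneg _⟩
  have hinf : ‖u - P u‖ = ⨅ w : C, ‖u - (w : EuclideanSpace ℝ (Fin m))‖ :=
    le_antisymm (le_ciInf fun w => hmin w w.2) (ciInf_le hbdd ⟨P u, hmem⟩)
  have hvar := (norm_eq_iInf_iff_real_inner_le_zero hc hmem).1 hinf s hs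
  have hexp : ‖u - s‖ ^ 2
      = ‖u - P u‖ ^ 2 + 2 * (inner ℝ (u - P u) (P u - s) : ℝ) + ‖P u - s‖ ^ 2 := by
    have h : u - s = (u - P u) + (P u - s) := by abel
    rw [h, norm_add_sq_real]
  have hin : 0 ≤ (inner ℝ (u - P u) (P u - s) : ℝ) := by
    have h : (inner ℝ (u - P u) (P u - s) : ℝ) = - inner ℝ (u - P u) (s - P u) := by
      rw [← inner_neg_right, neg_sub]
    linarith
  refine sq_le_imp (norm_nonneg _) ?_
  nlinarith [norm_nonneg (u - P u)]

set_option maxHeartbeats 2000000 in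
theorem stmt_14 {m n : ℕ} (hn : 1 ≤ n)
    -- local objective functions
    (f : Fin n → EuclideanSpace ℝ (Fin m) → ℝ)
    (hdiff : ∀ i, Differentiable ℝ (f i))
    (hconv : ∀ i, ConvexOn ℝ Set.univ (f i))
    -- Assumption 1: each Xᵢ = {x | ∇fᵢ(x) = 0} is nonempty and bounded
    (hXne : ∀ i, ({x : EuclideanSpace ℝ (Fin m) | gradient (f i) x = 0}).Nonempty)
    (hXbd : ∀ i, IsBounded {x : EuclideanSpace ℝ (Fin m) | gradient (f i) x = 0})
    -- constraint sets and Assumption 2: H = ⋂ᵢ Hᵢ ≠ ∅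
    (H : Fin n → Set (EuclideanSpace ℝ (Fin m)))
    (hHne : ∀ i, (H i).Nonempty) (hHcl : ∀ i, IsClosed (H i)) (hHcv : ∀ i, Convex ℝ (H i))
    (hHcap : (⋂ i, H i).Nonempty)
    (P : Fin n → EuclideanSpace ℝ (Fin m) → EuclideanSpace ℝ (Fin m))
    (hP : ∀ i, IsProjOn (H i) (P i))
    -- sample time
    (T : ℝ) (hT : 0 < T)
    -- Assumption 7: doubly stochastic weights, diagonal and nonzero entries ≥ η
    (η : ℝ) (hη0 : 0 < η) (hη1 : η ≤ 1)
    (a : ℕ → Fin n → Fin n → ℝ)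
    (ha_nn : ∀ k i j, 0 ≤ a k i j)
    (ha_diag : ∀ k i, η ≤ a k i i)
    (ha_η : ∀ k i j, a k i j ≠ 0 → η ≤ a k i j)
    (ha_col : ∀ k j, ∑ i, a k i j = 1)
    (ha_row : ∀ k i, ∑ j, a k i j = 1)
    -- relaxation parameters 0 < γᵢ ≤ 1
    (γ : Fin n → ℝ) (hγ : ∀ i, γ i ∈ Set.Ioc (0 : ℝ) 1)
    -- algorithm (8)
    (q : Fin n → ℕ → ℝ)
    (x v gr w : Fin n → ℕ → EuclideanSpace ℝ (Fin m))
    (hq0 : ∀ i, 0 < q i 0)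
    (hq : ∀ i k, q i (k + 1) = q i k + Real.arctan (Real.exp ‖x i k‖) * T)
    (hv : ∀ i k, v i k = ∑ j, a k i j • x j k)
    (hgr : ∀ i k, gr i k =
      if Real.sqrt (q i k) ≤ ‖gradient (f i) (v i k)‖ ^ 2 then 0
      else (Real.sqrt (q i k))⁻¹ • gradient (f i) (v i k))
    (hw : ∀ i k, w i k = v i k - T • gr i k)
    (hx : ∀ i k, x i (k + 1) = (1 - γ i) • w i k + γ i • P i (w i k)) :
    -- (1) boundedness
    (∃ R : ℝ, ∀ i, ∀ k : ℕ, ‖x i k‖ ≤ R) ∧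
    -- (2) the gradient branch is eventually active
    ∃ K : ℕ, ∀ i, ∀ k : ℕ, K ≤ k →
      ‖gradient (f i) (v i k)‖ ^ 2 < Real.sqrt (q i k) ∧
      gr i k = (Real.sqrt (q i k))⁻¹ • gradient (f i) (v i k) := by
  classical
  haveI : Nonempty (Fin n) := ⟨⟨0, hn⟩⟩
  -- basic facts about q
  have hqstep : ∀ i k, q i k + Real.pi / 4 * T ≤ q i (k + 1) := by
    intro i k
    rw [hq]
    have h1 : Real.pi / 4 ≤ Real.arctan (Real.exp ‖x i k‖) := by
      rw [← Real.arctan_one]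
      exact Real.arctan_strictMono.monotone (Real.one_le_exp (norm_nonneg _))
    nlinarith
  have hqmono : ∀ i k l, k ≤ l → q i k ≤ q i l := by
    intro i k l hkl
    induction l with
    | zero => simp at hkl; simp [hkl]
    | succ l ih =>
      rcases Nat.lt_or_ge k (l + 1) with h | h
      · have h2 := hqstep i l
        have h3 := ih (Nat.lt_succ_iff.mp h)
        have : 0 < Real.pi / 4 * T := by positivity
        linarith
      · have : k = l + 1 := le_antisymm hkl h
        simp [this]
  have hqpos : ∀ i k, 0 < q i k := fun i k => lt_of_lt_of_le (hq0 i) (hqmono i 0 k (Nat.zero_le _))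
  have hqgrow : ∀ i k, q i 0 + k * (Real.pi / 4 * T) ≤ q i k := by
    intro i k
    induction k with
    | zero => simp
    | succ k ih =>
      have := hqstep i k
      push_cast
      push_cast at ih
      linarith
  -- the trivial degenerate case m = 0
  rcases Nat.eq_zero_or_pos m with hm | hm
  · subst hm
    haveI : Subsingleton (EuclideanSpace ℝ (Fin 0)) := ⟨fun a b => PiLp.ext fun i => i.elim0⟩
    refine ⟨⟨0, fun i k => le_of_eq (by rw [Subsingleton.elim (x i k) 0, norm_zero])⟩,
      0, fun i k _ => ?_⟩
    have h1 : ‖gradient (f i) (v i k)‖ ^ 2 < Real.sqrt (q i k) := by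
      rw [Subsingleton.elim (gradient (f i) (v i k)) 0, norm_zero]
      simpa using Real.sqrt_pos.mpr (hqpos i k)
    exact ⟨h1, Subsingleton.elim _ _⟩
  haveI : Nonempty (Fin m) := ⟨⟨0, hm⟩⟩
  haveI : Nontrivial (EuclideanSpace ℝ (Fin m)) := inferInstance
  -- common point of the constraint sets
  obtain ⟨xs, hxs⟩ := hHcap
  have hxsH : ∀ i, xs ∈ H i := fun i => Set.mem_iInter.1 hxs i
  -- gradient inequality
  have gradineq : ∀ i (p y : EuclideanSpace ℝ (Fin m)),
      (inner ℝ (gradient (f i) p) (y - p) : ℝ) ≤ f i y - f i p :=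
    fun i => grad_ineq (hdiff i) (hconv i)
  -- global minimizers
  choose x0 hx0 using hXne
  have hmin : ∀ i y, f i (x0 i) ≤ f i y := by
    intro i y
    have h := gradineq i (x0 i) y
    have h0 : gradient (f i) (x0 i) = 0 := hx0 i
    rw [h0] at h
    simp only [inner_zero_left] at h
    linarith
  -- radii of critical sets
  have hρex : ∀ i, ∃ ρ : ℝ, 0 < ρ ∧
      {y : EuclideanSpace ℝ (Fin m) | gradient (f i) y = 0} ⊆ Metric.closedBall (x0 i) ρ := by
    intro i
    obtain ⟨r, hr⟩ := (hXbd i).subset_closedBall (x0 i)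
    exact ⟨max r 1, lt_of_lt_of_le one_pos (le_max_right _ _),
      hr.trans (Metric.closedBall_subset_closedBall (le_max_left _ _))⟩
  choose ρ hρpos hρ using hρex
  -- positive gap on the sphere of radius 2ρ
  have hδex : ∀ i, ∃ δ : ℝ, 0 < δ ∧
      ∀ y ∈ Metric.sphere (x0 i) (2 * ρ i), δ ≤ f i y - f i (x0 i) := by
    intro i
    have hsne : (Metric.sphere (x0 i) (2 * ρ i)).Nonempty :=
      NormedSpace.sphere_nonempty.mpr (by linarith [hρpos i])
    obtain ⟨y0, hy0, hy0min⟩ := (isCompact_sphere (x0 i) (2 * ρ i)).exists_isMinOn hsne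
      ((hdiff i).continuous.continuousOn)
    refine ⟨f i y0 - f i (x0 i), ?_, fun y hy => by
      have := hy0min hy; simp only [Set.mem_setOf_eq] at this; linarith⟩
    have hne : gradient (f i) y0 ≠ 0 := by
      intro h0
      have hmem : y0 ∈ Metric.closedBall (x0 i) (ρ i) := hρ i h0
      rw [Metric.mem_closedBall] at hmem
      rw [Metric.mem_sphere] at hy0
      nlinarith [hρpos i]
    have hlt : f i (x0 i) < f i y0 := by
      rcases lt_or_eq_of_le (hmin i y0) with h | h
      · exact h
      · exfalso
        apply hne
        have hloc : IsLocalMin (f i) y0 :=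
          Filter.Eventually.of_forall fun z => by rw [← h]; exact hmin i z
        have hfd : fderiv ℝ (f i) y0 = 0 := hloc.fderiv_eq_zero
        rw [gradient, hfd, map_zero]
    linarith
  choose δ hδpos hδs using hδex
  -- coercivity
  have coer : ∀ i (p : EuclideanSpace ℝ (Fin m)), 2 * ρ i ≤ ‖p - x0 i‖ →
      δ i * (‖p - x0 i‖ / (2 * ρ i)) ≤ f i p - f i (x0 i) := by
    intro i p hp
    have hd : (0:ℝ) < 2 * ρ i := by linarith [hρpos i]
    set d := ‖p - x0 i‖ with hdd
    have hdpos : 0 < d := lt_of_lt_of_le hd hp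
    set t : ℝ := d / (2 * ρ i) with ht
    have ht1 : 1 ≤ t := (one_le_div hd).mpr hp
    have htpos : 0 < t := lt_of_lt_of_le one_pos ht1
    set u : EuclideanSpace ℝ (Fin m) := x0 i + t⁻¹ • (p - x0 i) with hu
    have humem : u ∈ Metric.sphere (x0 i) (2 * ρ i) := by
      rw [Metric.mem_sphere, dist_eq_norm]
      have : u - x0 i = t⁻¹ • (p - x0 i) := by rw [hu]; abel
      rw [this, norm_smul, Real.norm_eq_abs, abs_of_pos (inv_pos.mpr htpos), ← hdd]
      rw [ht]
      field_simp
    have hfu : δ i ≤ f i u - f i (x0 i) := hδs i u humem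
    have hcomb : u = (1 - t⁻¹) • x0 i + t⁻¹ • p := by rw [hu]; module
    have h0le : (0:ℝ) ≤ 1 - t⁻¹ := by
      have : t⁻¹ ≤ 1 := inv_le_one_of_one_le₀ ht1
      linarith
    have hcv := (hconv i).2 (Set.mem_univ (x0 i)) (Set.mem_univ p) h0le
      (le_of_lt (inv_pos.mpr htpos)) (by field_simp; ring)
    rw [← hcomb] at hcv
    simp only [smul_eq_mul] at hcv
    -- δ ≤ t⁻¹ * (f i p − f i (x0 i))
    have h5 : δ i ≤ t⁻¹ * (f i p - f i (x0 i)) := by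
      have hring : (1 - t⁻¹) * f i (x0 i) + t⁻¹ * f i p - f i (x0 i)
          = t⁻¹ * (f i p - f i (x0 i)) := by ring
      linarith [hcv, hfu]
    have h6 := mul_le_mul_of_nonneg_left h5 htpos.le
    rw [← mul_assoc, mul_inv_cancel₀ htpos.ne', one_mul] at h6
    calc δ i * (d / (2 * ρ i)) = δ i * t := by rw [ht]
      _ = t * δ i := by ring
      _ ≤ f i p - f i (x0 i) := h6
  -- constants
  set B : Fin n → ℝ := fun i => f i xs - f i (x0 i) with hB
  set c : Fin n → ℝ := fun i => δ i / (2 * ρ i) with hc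
  have hcpos : ∀ i, 0 < c i := fun i => div_pos (hδpos i) (by linarith [hρpos i])
  set M₀ : Fin n → ℝ := fun i => ‖x0 i - xs‖ + max (2 * ρ i) ((B i + T / 2 + 1) / c i) with hM₀
  have hM₀nn : ∀ i, 0 ≤ M₀ i := by
    intro i
    have h1 : (0:ℝ) ≤ 2 * ρ i := by linarith [hρpos i]
    exact add_nonneg (norm_nonneg _) (h1.trans (le_max_left _ _))
  set g : Fin n → ℝ := fun i => (Real.sqrt (Real.sqrt (q i 0)))⁻¹ with hg
  have hgnn : ∀ i, 0 ≤ g i := fun i => inv_nonneg.mpr (Real.sqrt_nonneg _)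
  set Mc : ℝ := ∑ i, (M₀ i + T * g i) with hMc
  have hMcb : ∀ i, M₀ i + T * g i ≤ Mc := by
    intro i
    exact Finset.single_le_sum (f := fun i => M₀ i + T * g i)
      (fun j _ => add_nonneg (hM₀nn j) (mul_nonneg hT.le (hgnn j))) (Finset.mem_univ i)
  have hMcnn : 0 ≤ Mc :=
    Finset.sum_nonneg fun j _ => add_nonneg (hM₀nn j) (mul_nonneg hT.le (hgnn j))
  set M1 : ℝ := ∑ j, ‖x j 0 - xs‖ with hM1
  have hM1b : ∀ j, ‖x j 0 - xs‖ ≤ M1 :=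
    fun j => Finset.single_le_sum (f := fun j => ‖x j 0 - xs‖)
      (fun j _ => norm_nonneg _) (Finset.mem_univ j)
  have hM1nn : 0 ≤ M1 := Finset.sum_nonneg fun j _ => norm_nonneg _
  set Mt : ℝ := Mc + M1 with hMt
  -- bound on the norm of gr in the active branch
  have hgrnorm : ∀ i k, ‖gradient (f i) (v i k)‖ ^ 2 < Real.sqrt (q i k) →
      (Real.sqrt (q i k))⁻¹ * ‖gradient (f i) (v i k)‖ ≤ g i := by
    intro i k hG2
    set s := Real.sqrt (q i k) with hs'
    have hs : 0 < s := Real.sqrt_pos.mpr (hqpos i k)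
    have hsq : 0 < Real.sqrt s := Real.sqrt_pos.mpr hs
    have hGs : ‖gradient (f i) (v i k)‖ ≤ Real.sqrt s := by
      have h := Real.sqrt_le_sqrt hG2.le
      rwa [Real.sqrt_sq (norm_nonneg _)] at h
    have h1 : s⁻¹ * ‖gradient (f i) (v i k)‖ ≤ s⁻¹ * Real.sqrt s :=
      mul_le_mul_of_nonneg_left hGs (inv_nonneg.mpr hs.le)
    have h2 : s⁻¹ * Real.sqrt s = (Real.sqrt s)⁻¹ := by
      have hx : Real.sqrt s * Real.sqrt s = s := Real.mul_self_sqrt hs.le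
      calc s⁻¹ * Real.sqrt s = (Real.sqrt s * Real.sqrt s)⁻¹ * Real.sqrt s := by rw [hx]
        _ = (Real.sqrt s)⁻¹ * ((Real.sqrt s)⁻¹ * Real.sqrt s) := by rw [mul_inv]; ring
        _ = (Real.sqrt s)⁻¹ := by rw [inv_mul_cancel₀ hsq.ne', mul_one]
    have h3 : (Real.sqrt s)⁻¹ ≤ g i := by
      rw [hg]
      have hmono : Real.sqrt (Real.sqrt (q i 0)) ≤ Real.sqrt s := by
        exact Real.sqrt_le_sqrt (Real.sqrt_le_sqrt (hqmono i 0 k (Nat.zero_le _)))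
      have hpos0 : 0 < Real.sqrt (Real.sqrt (q i 0)) :=
        Real.sqrt_pos.mpr (Real.sqrt_pos.mpr (hq0 i))
      have := one_div_le_one_div_of_le hpos0 hmono
      simpa [one_div] using this
    calc s⁻¹ * ‖gradient (f i) (v i k)‖ ≤ s⁻¹ * Real.sqrt s := h1
      _ = (Real.sqrt s)⁻¹ := h2
      _ ≤ g i := h3
  -- step bound via the averaging
  have hvstep : ∀ i k (M : ℝ), (∀ j, ‖x j k - xs‖ ≤ M) → ‖v i k - xs‖ ≤ M := by
    intro i k M hM
    have key : v i k - xs = ∑ j, a k i j • (x j k - xs) := by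
      rw [hv]
      have hsum : ∑ j, a k i j • xs = xs := by rw [← Finset.sum_smul, ha_row k i, one_smul]
      calc (∑ j, a k i j • x j k) - xs = (∑ j, a k i j • x j k) - ∑ j, a k i j • xs := by
            rw [hsum]
        _ = ∑ j, (a k i j • x j k - a k i j • xs) := by rw [Finset.sum_sub_distrib]
        _ = ∑ j, a k i j • (x j k - xs) := by simp [smul_sub]
    calc ‖v i k - xs‖ = ‖∑ j, a k i j • (x j k - xs)‖ := by rw [key]
      _ ≤ ∑ j, ‖a k i j • (x j k - xs)‖ := norm_sum_le _ _
      _ = ∑ j, a k i j * ‖x j k - xs‖ := by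
          refine Finset.sum_congr rfl fun j _ => ?_
          rw [norm_smul, Real.norm_eq_abs, abs_of_nonneg (ha_nn k i j)]
      _ ≤ ∑ j, a k i j * M :=
          Finset.sum_le_sum fun j _ => mul_le_mul_of_nonneg_left (hM j) (ha_nn k i j)
      _ = M := by rw [← Finset.sum_mul, ha_row k i, one_mul]
  -- projection step
  have hxstep : ∀ i k, ‖x i (k + 1) - xs‖ ≤ ‖w i k - xs‖ := by
    intro i k
    obtain ⟨hγ0, hγ1⟩ := hγ i
    have hPle : ‖P i (w i k) - xs‖ ≤ ‖w i k - xs‖ := proj_ineq (hHcv i) (hP i) (w i k) (hxsH i)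
    have hsplit : x i (k + 1) - xs = (1 - γ i) • (w i k - xs) + γ i • (P i (w i k) - xs) := by
      rw [hx]; module
    rw [hsplit]
    calc ‖(1 - γ i) • (w i k - xs) + γ i • (P i (w i k) - xs)‖
        ≤ ‖(1 - γ i) • (w i k - xs)‖ + ‖γ i • (P i (w i k) - xs)‖ := norm_add_le _ _
      _ = (1 - γ i) * ‖w i k - xs‖ + γ i * ‖P i (w i k) - xs‖ := by
          rw [norm_smul, norm_smul, Real.norm_eq_abs, Real.norm_eq_abs,
            abs_of_nonneg (by linarith), abs_of_nonneg hγ0.le]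
      _ ≤ (1 - γ i) * ‖w i k - xs‖ + γ i * ‖w i k - xs‖ :=
          add_le_add_right (mul_le_mul_of_nonneg_left hPle hγ0.le) _
      _ = ‖w i k - xs‖ := by ring
  -- main induction: all iterates stay within distance Mt of xs
  have claim : ∀ k j, ‖x j k - xs‖ ≤ Mt := by
    intro k
    induction k with
    | zero => exact fun j => (hM1b j).trans (le_add_of_nonneg_left hMcnn)
    | succ k ih =>
      intro i
      have hvb : ‖v i k - xs‖ ≤ Mt := hvstep i k Mt ih
      have hwb : ‖w i k - xs‖ ≤ Mt := by
        rw [hw i k, hgr i k]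
        split_ifs with hcond
        · simpa using hvb
        · push_neg at hcond
          set p := v i k with hp
          set s := Real.sqrt (q i k) with hs'
          set G := gradient (f i) p with hG
          have hs : 0 < s := Real.sqrt_pos.mpr (hqpos i k)
          have hrw : p - T • (s⁻¹ • G) - xs = (p - xs) - (T * s⁻¹) • G := by
            rw [smul_smul]; abel
          rw [hrw]
          by_cases hcase : M₀ i ≤ ‖p - xs‖
          · -- descent case
            have htri : ‖p - xs‖ - ‖x0 i - xs‖ ≤ ‖p - x0 i‖ := by
              have h := norm_add_le (p - x0 i) (x0 i - xs)
              rw [sub_add_sub_cancel] at h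
              linarith
            have hmax1 : 2 * ρ i ≤ max (2 * ρ i) ((B i + T / 2 + 1) / c i) := le_max_left _ _
            have hmax2 : (B i + T / 2 + 1) / c i ≤ max (2 * ρ i) ((B i + T / 2 + 1) / c i) :=
              le_max_right _ _
            have hM₀i : M₀ i = ‖x0 i - xs‖ + max (2 * ρ i) ((B i + T / 2 + 1) / c i) := rfl
            have h2ρ : 2 * ρ i ≤ ‖p - x0 i‖ := by
              rw [hM₀i] at hcase; linarith
            have hcb : (B i + T / 2 + 1) / c i ≤ ‖p - x0 i‖ := by
              rw [hM₀i] at hcase; linarith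
            have hco := coer i p h2ρ
            have hc' : B i + T / 2 + 1 ≤ c i * ‖p - x0 i‖ := by
              rw [div_le_iff₀ (hcpos i)] at hcb
              linarith [hcb]
            have hcoe' : c i * ‖p - x0 i‖ ≤ f i p - f i (x0 i) := by
              have heq : δ i * (‖p - x0 i‖ / (2 * ρ i)) = c i * ‖p - x0 i‖ := by
                simp only [hc]; ring
              linarith [hco, heq.symm.le, heq.le]
            have hfp : T / 2 + 1 ≤ f i p - f i xs := by
              have hBdef : B i = f i xs - f i (x0 i) := rfl
              linarith
            have hinner : T / 2 + 1 ≤ (inner ℝ G (p - xs) : ℝ) := by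
              have h := gradineq i p xs
              have h2 : (inner ℝ G (xs - p) : ℝ) = - inner ℝ G (p - xs) := by
                rw [← inner_neg_right, neg_sub]
              rw [← hG] at h
              rw [h2] at h
              linarith
            have hw2 : ‖(p - xs) - (T * s⁻¹) • G‖ ^ 2 ≤ ‖p - xs‖ ^ 2 := by
              rw [norm_sub_sq_real, real_inner_smul_right, norm_smul, Real.norm_eq_abs,
                abs_of_pos (by positivity : (0:ℝ) < T * s⁻¹)]
              have hsym : (inner ℝ (p - xs) G : ℝ) = inner ℝ G (p - xs) := real_inner_comm _ _
              rw [hsym]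
              have hA : (T * s⁻¹ * ‖G‖) ^ 2 = (T * s⁻¹) ^ 2 * ‖G‖ ^ 2 := by ring
              have h1 : (T * s⁻¹) ^ 2 * ‖G‖ ^ 2 ≤ (T * s⁻¹) ^ 2 * s :=
                mul_le_mul_of_nonneg_left hcond.le (sq_nonneg _)
              have h2 : (T * s⁻¹) ^ 2 * s = T ^ 2 * s⁻¹ := by
                have hss : s⁻¹ * s = 1 := inv_mul_cancel₀ hs.ne'
                calc (T * s⁻¹) ^ 2 * s = T ^ 2 * s⁻¹ * (s⁻¹ * s) := by ring
                  _ = T ^ 2 * s⁻¹ := by rw [hss, mul_one]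
              have hTs : (0:ℝ) ≤ T * s⁻¹ := mul_nonneg hT.le (inv_nonneg.mpr hs.le)
              have h3 : 2 * (T * s⁻¹ * (T / 2 + 1)) ≤ 2 * (T * s⁻¹ * (inner ℝ G (p - xs) : ℝ)) := by
                have := mul_le_mul_of_nonneg_left hinner hTs
                linarith
              have h4 : 2 * (T * s⁻¹ * (T / 2 + 1)) = T ^ 2 * s⁻¹ + 2 * (T * s⁻¹) := by ring
              linarith
            have := sq_le_imp (norm_nonneg (p - xs)) hw2
            linarith [hvb]
          · -- small case
            push_neg at hcase
            have hnb : ‖(p - xs) - (T * s⁻¹) • G‖ ≤ ‖p - xs‖ + T * (s⁻¹ * ‖G‖) := by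
              have h := norm_sub_le (p - xs) ((T * s⁻¹) • G)
              rw [norm_smul, Real.norm_eq_abs, abs_of_pos (by positivity : (0:ℝ) < T * s⁻¹)] at h
              calc ‖(p - xs) - (T * s⁻¹) • G‖ ≤ ‖p - xs‖ + T * s⁻¹ * ‖G‖ := h
                _ = ‖p - xs‖ + T * (s⁻¹ * ‖G‖) := by ring
            have hgb : s⁻¹ * ‖G‖ ≤ g i := hgrnorm i k hcond
            have : ‖(p - xs) - (T * s⁻¹) • G‖ ≤ M₀ i + T * g i := by
              have h7 := mul_le_mul_of_nonneg_left hgb hT.le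
              have h8 : ‖p - xs‖ + T * (s⁻¹ * ‖G‖) ≤ M₀ i + T * g i := add_le_add hcase.le h7
              exact hnb.trans h8
            exact this.trans ((hMcb i).trans (le_add_of_nonneg_right hM1nn))
      exact (hxstep i k).trans hwb
  -- Part 1
  set R : ℝ := Mt + ‖xs‖ with hR
  have hxbound : ∀ i k, ‖x i k‖ ≤ R := by
    intro i k
    have h := norm_add_le (x i k - xs) xs
    rw [sub_add_cancel] at h
    exact h.trans (add_le_add_left (claim k i) _)
  have hvbound : ∀ i k, ‖v i k‖ ≤ R := by
    intro i k
    have h := norm_add_le (v i k - xs) xs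
    rw [sub_add_cancel] at h
    exact h.trans (add_le_add_left (hvstep i k Mt (claim k)) _)
  have hRnn : 0 ≤ R := add_nonneg (by positivity) (norm_nonneg _)
  refine ⟨⟨R, hxbound⟩, ?_⟩
  -- Part 2: uniform gradient bound on the ball of radius R
  have hΓex : ∀ i, ∃ Γ : ℝ, 0 ≤ Γ ∧
      ∀ p : EuclideanSpace ℝ (Fin m), ‖p‖ ≤ R → ‖gradient (f i) p‖ ≤ Γ := by
    intro i
    obtain ⟨y0, hy0mem, hy0max⟩ := (isCompact_closedBall (0 : EuclideanSpace ℝ (Fin m))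
      (R + 1)).exists_isMaxOn ⟨0, Metric.mem_closedBall_self (by linarith)⟩ ((hdiff i).continuous.continuousOn)
    refine ⟨max 0 (f i y0 - f i (x0 i)), le_max_left _ _, fun p hp => ?_⟩
    by_cases hG0 : gradient (f i) p = 0
    · rw [hG0, norm_zero]; exact le_max_left _ _
    · set G := gradient (f i) p with hGdef
      set u : EuclideanSpace ℝ (Fin m) := ‖G‖⁻¹ • G with hu
      have hunorm : ‖u‖ = 1 := by
        rw [hu, norm_smul, norm_inv, norm_norm, inv_mul_cancel₀ (norm_ne_zero_iff.mpr hG0)]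
      have h1 := gradineq i p (p + u)
      have h2 : (inner ℝ G (p + u - p) : ℝ) = ‖G‖ := by
        rw [add_sub_cancel_left, hu, real_inner_smul_right, real_inner_self_eq_norm_sq,
          sq, ← mul_assoc, inv_mul_cancel₀ (norm_ne_zero_iff.mpr hG0), one_mul]
      rw [← hGdef, h2] at h1
      have h3 : f i (p + u) ≤ f i y0 := by
        apply hy0max
        rw [Metric.mem_closedBall, dist_zero_right]
        calc ‖p + u‖ ≤ ‖p‖ + ‖u‖ := norm_add_le _ _
          _ ≤ R + 1 := by rw [hunorm]; linarith
      have h4 : f i (x0 i) ≤ f i p := hmin i p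
      have : ‖G‖ ≤ f i y0 - f i (x0 i) := by linarith
      exact this.trans (le_max_right _ _)
  choose Γ hΓnn hΓ using hΓex
  set Γm : ℝ := ∑ i, Γ i with hΓm
  have hΓmb : ∀ i, Γ i ≤ Γm :=
    fun i => Finset.single_le_sum (f := fun i => Γ i) (fun j _ => hΓnn j) (Finset.mem_univ i)
  have hΓmnn : 0 ≤ Γm := Finset.sum_nonneg fun j _ => hΓnn j
  have hcq : (0:ℝ) < Real.pi / 4 * T := by positivity
  obtain ⟨K, hK⟩ := exists_nat_gt (Γm ^ 4 / (Real.pi / 4 * T))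
  refine ⟨K, fun i k hk => ?_⟩
  have hqk : Γm ^ 4 < q i k := by
    have h1 : (Γm ^ 4 / (Real.pi / 4 * T)) * (Real.pi / 4 * T) < (K : ℝ) * (Real.pi / 4 * T) :=
      mul_lt_mul_of_pos_right hK hcq
    rw [div_mul_cancel₀ _ hcq.ne'] at h1
    have h2 : (K : ℝ) ≤ (k : ℝ) := Nat.cast_le.mpr hk
    have h3 := hqgrow i k
    have h4 : (K : ℝ) * (Real.pi / 4 * T) ≤ (k : ℝ) * (Real.pi / 4 * T) :=
      mul_le_mul_of_nonneg_right h2 hcq.le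
    linarith [hq0 i]
  have hGle : ‖gradient (f i) (v i k)‖ ≤ Γ i := hΓ i (v i k) (hvbound i k)
  have hkey : ‖gradient (f i) (v i k)‖ ^ 2 < Real.sqrt (q i k) := by
    have h1 : ‖gradient (f i) (v i k)‖ ^ 2 ≤ Γ i ^ 2 :=
      pow_le_pow_left₀ (norm_nonneg _) hGle 2
    have h2 : Γ i ^ 2 ≤ Γm ^ 2 := pow_le_pow_left₀ (hΓnn i) (hΓmb i) 2
    have h3 : (Γm ^ 2) ^ 2 < q i k := by nlinarith
    have h4 : Γm ^ 2 < Real.sqrt (q i k) := (Real.lt_sqrt (by positivity)).mpr h3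
    linarith
  refine ⟨hkey, ?_⟩
  rw [hgr i k, if_neg (not_le.mpr hkey)]
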